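/- Let (y_{n,i})_{n∈A, i≥1} be independent random variables with y_{n,i} ~ N(μ_n + c_n·i, σ_n²) for a finite nonempty index set A, constants c_n ∈ ℝ and σ_n > 0. Define λ_j = Σ_{n∈A} (1/σ_n²) Σ_{i=1}^j [c_n·i·(y_{n,i} − μ_n) − c_n² i²/2]. Then λ_j / j³ converges almost surely to Σ_{n∈A} c_n²/(6σ_n²) as j → ∞. -/

import Mathlib

open Finset MeasureTheory ProbabilityTheory Filter
open scoped NNReal ENNReal

section AuxGauss
open Real

lemma aux_sq_integrable (v : ℝ≥0) :
    Integrable (fun x : ℝ => x ^ 2) (gaussianReal 0 v) := by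
  by_cases hv : v = 0
  · subst hv
    rw [gaussianReal_zero_var]
    refine ⟨(measurable_id.pow_const 2).aestronglyMeasurable, ?_⟩
    simp [HasFiniteIntegral, lintegral_dirac' _ (measurable_id.pow_const 2).enorm,
      lintegral_dirac' _ (measurable_enorm.pow_const 2)]
  · rw [gaussianReal_of_var_ne_zero _ hv, gaussianPDF_def,
      integrable_withDensity_iff (measurable_gaussianPDFReal 0 v).ennreal_ofReal
        (ae_of_all _ fun x => ENNReal.ofReal_lt_top)]
    have hb : 0 < (2 * (v:ℝ))⁻¹ := by positivity
    have h := integrable_rpow_mul_exp_neg_mul_sq hb (show (-1:ℝ) < 2 by norm_num)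
    simp_rw [rpow_two] at h
    have := (h.const_mul ((Real.sqrt (2 * Real.pi * v))⁻¹))
    apply this.congr
    filter_upwards with x
    rw [ENNReal.toReal_ofReal (gaussianPDFReal_nonneg 0 v x), gaussianPDFReal]
    ring_nf

lemma aux_memLp_id (v : ℝ≥0) : MemLp (fun x : ℝ => x) 2 (gaussianReal 0 v) :=
  (memLp_two_iff_integrable_sq measurable_id.aestronglyMeasurable).mpr (aux_sq_integrable v)

lemma aux_integral_id (v : ℝ≥0) : ∫ x, x ∂(gaussianReal 0 v) = 0 := by
  have hmap : (gaussianReal 0 v).map (fun x : ℝ => -1 * x) = gaussianReal 0 v := by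
    have := gaussianReal_map_const_mul (μ := 0) (v := v) (-1)
    simpa using this
  have hInt : Integrable (fun x : ℝ => x) (gaussianReal 0 v) :=
    (aux_memLp_id v).integrable one_le_two
  have h1 : ∫ x, x ∂(gaussianReal 0 v)
      = ∫ x, x ∂((gaussianReal 0 v).map (fun x : ℝ => -1 * x)) := by rw [hmap]
  rw [integral_map (f := fun x : ℝ => x) (by fun_prop)
    measurable_id.aestronglyMeasurable] at h1
  simp only [neg_one_mul] at h1
  rw [integral_neg] at h1
  linarith

lemma aux_sq_nonneg (v : ℝ≥0) : 0 ≤ ∫ x, x ^ 2 ∂(gaussianReal 0 v) :=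
  integral_nonneg fun x => sq_nonneg x

end AuxGauss

/-- Strong law for the slope-change log-likelihood ratio:
`λ_j / j³ → Σ_{n∈A} c_n²/(6σ_n²)` almost surely. -/
theorem loglik_cubic_slln {Ω : Type*} {mΩ : MeasurableSpace Ω}
    (μ : Measure Ω) [IsProbabilityMeasure μ]
    {ι : Type*} [Fintype ι] [Nonempty ι]
    (m c σ : ι → ℝ) (hσ : ∀ n, 0 < σ n)
    (y : ι → ℕ → Ω → ℝ)
    (hindep : iIndepFun (fun p : ι × ℕ => y p.1 p.2) μ)
    (hgauss : ∀ n, ∀ i : ℕ, 1 ≤ i →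
      Measure.map (y n i) μ = gaussianReal (m n + c n * i) (Real.toNNReal ((σ n) ^ 2)))
    (lam : ℕ → Ω → ℝ)
    (hlam : ∀ j, lam j = fun ω =>
      ∑ n : ι, (1 / (σ n) ^ 2) *
        ∑ i ∈ Finset.Icc 1 j, (c n * i * (y n i ω - m n) - c n ^ 2 * (i : ℝ) ^ 2 / 2)) :
    ∀ᵐ ω ∂μ, Tendsto (fun j : ℕ => lam j ω / (j : ℝ) ^ 3) atTop
      (nhds (∑ n : ι, c n ^ 2 / (6 * (σ n) ^ 2))) := by
  classical
  set vv : ι → ℝ≥0 := fun n => Real.toNNReal ((σ n) ^ 2) with hvv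
  set V : ι → ℝ := fun n => ∫ x, x ^ 2 ∂(gaussianReal 0 (vv n)) with hV
  have hVnn : ∀ n, 0 ≤ V n := fun n => aux_sq_nonneg (vv n)
  -- the centered variables
  set ε : ι → ℕ → Ω → ℝ := fun n i ω => y n i ω - (m n + c n * i) with hε
  have hy_ae : ∀ n i, 1 ≤ i → AEMeasurable (y n i) μ := by
    intro n i hi
    by_contra hc
    have h0 := hgauss n i hi
    rw [Measure.map_of_not_aemeasurable hc] at h0
    have : (0 : Measure ℝ) Set.univ = (gaussianReal (m n + c n * i) (vv n)) Set.univ := by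
      rw [h0]
    simp [measure_univ] at this
  have hmapε : ∀ n i, 1 ≤ i → Measure.map (ε n i) μ = gaussianReal 0 (vv n) := by
    intro n i hi
    have h1 : Measure.map (ε n i) μ
        = Measure.map (fun x : ℝ => x + -(m n + c n * i)) (Measure.map (y n i) μ) := by
      rw [AEMeasurable.map_map_of_aemeasurable (by fun_prop) (hy_ae n i hi)]
      congr 1
    rw [h1, hgauss n i hi]
    rw [gaussianReal_map_add_const (-(m n + c n * i))]
    congr 1
    ring
  have hε_ae : ∀ n i, 1 ≤ i → AEMeasurable (ε n i) μ := by
    intro n i hi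
    exact (hy_ae n i hi).sub aemeasurable_const
  have hmemε : ∀ n i, 1 ≤ i → MemLp (ε n i) 2 μ := by
    intro n i hi
    have h := (memLp_map_measure_iff (g := fun x : ℝ => x) (p := 2)
      measurable_id.aestronglyMeasurable (hε_ae n i hi)).mp
    rw [hmapε n i hi] at h
    exact h (aux_memLp_id (vv n))
  have hintε : ∀ n i, 1 ≤ i → ∫ ω, ε n i ω ∂μ = 0 := by
    intro n i hi
    have h := integral_map (hε_ae n i hi) (f := fun x : ℝ => x)
      measurable_id.aestronglyMeasurable
    rw [hmapε n i hi, aux_integral_id (vv n)] at h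
    exact h.symm
  have hsqε : ∀ n i, 1 ≤ i → ∫ ω, (ε n i ω) ^ 2 ∂μ = V n := by
    intro n i hi
    have h := integral_map (hε_ae n i hi) (f := fun x : ℝ => x ^ 2)
      (measurable_id.pow_const 2).aestronglyMeasurable
    rw [hmapε n i hi] at h
    exact h.symm
  -- the centered summands
  set a : ι × ℕ → ℝ := fun p => c p.1 * p.2 / σ p.1 ^ 2 with ha
  set X : ι × ℕ → Ω → ℝ := fun p ω => a p * ε p.1 p.2 ω with hX
  have hXindep : iIndepFun X μ := by
    refine hindep.comp (fun p x => a p * (x - (m p.1 + c p.1 * p.2))) (fun p => ?_)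
    fun_prop
  have hXmem : ∀ p : ι × ℕ, 1 ≤ p.2 → MemLp (X p) 2 μ := fun p hp =>
    (hmemε p.1 p.2 hp).const_mul _
  have hXint : ∀ p : ι × ℕ, 1 ≤ p.2 → ∫ ω, X p ω ∂μ = 0 := by
    intro p hp
    rw [hX]
    simp only [integral_const_mul, hintε p.1 p.2 hp, mul_zero]
  have hXvar : ∀ p : ι × ℕ, 1 ≤ p.2 → variance (X p) μ = a p ^ 2 * V p.1 := by
    intro p hp
    rw [variance_eq_sub (hXmem p hp)]
    have h2 : ∫ ω, (X p ω) ^ 2 ∂μ = a p ^ 2 * V p.1 := by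
      simp only [hX, mul_pow, integral_const_mul, hsqε p.1 p.2 hp]
    have h1 := hXint p hp
    calc μ[X p ^ 2] - (μ[X p]) ^ 2 = (∫ ω, (X p ω) ^ 2 ∂μ) - (∫ ω, X p ω ∂μ) ^ 2 := rfl
    _ = a p ^ 2 * V p.1 := by rw [h1, h2]; ring
  -- the partial sums
  set S : ℕ → Ω → ℝ := fun j => ∑ p ∈ Finset.univ ×ˢ Finset.Icc 1 j, X p with hS
  have hmemP : ∀ j : ℕ, ∀ p ∈ Finset.univ ×ˢ Finset.Icc 1 j, MemLp (X p) 2 μ := by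
    intro j p hp
    exact hXmem p (Finset.mem_Icc.mp (Finset.mem_product.mp hp).2).1
  have hSmem : ∀ j, MemLp (S j) 2 μ := fun j => memLp_finset_sum' _ (hmemP j)
  have hSint : ∀ j, ∫ ω, S j ω ∂μ = 0 := by
    intro j
    have h1 : ∫ ω, S j ω ∂μ
        = ∑ p ∈ Finset.univ ×ˢ Finset.Icc 1 j, ∫ ω, X p ω ∂μ := by
      rw [hS]
      simp only [Finset.sum_apply]
      exact integral_finset_sum _ fun p hp => (hmemP j p hp).integrable one_le_two
    rw [h1]
    exact Finset.sum_eq_zero fun p hp =>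
      hXint p (Finset.mem_Icc.mp (Finset.mem_product.mp hp).2).1
  set K : ℝ := ∑ n : ι, c n ^ 2 / (σ n ^ 2) ^ 2 * V n with hK
  have hKnn : 0 ≤ K :=
    Finset.sum_nonneg fun n _ => mul_nonneg (by positivity) (hVnn n)
  have hsumsq : ∀ j : ℕ, ∑ i ∈ Finset.Icc 1 j, (i : ℝ) ^ 2 ≤ (j : ℝ) ^ 3 := by
    intro j
    calc ∑ i ∈ Finset.Icc 1 j, (i : ℝ) ^ 2 ≤ ∑ _i ∈ Finset.Icc 1 j, (j : ℝ) ^ 2 := by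
          refine Finset.sum_le_sum fun i hi => ?_
          have : (i : ℝ) ≤ (j : ℝ) := Nat.cast_le.mpr (Finset.mem_Icc.mp hi).2
          have h0 : (0:ℝ) ≤ (i:ℝ) := Nat.cast_nonneg i
          nlinarith
    _ = (j : ℝ) * (j : ℝ) ^ 2 := by
          rw [Finset.sum_const, Nat.card_Icc]
          simp [nsmul_eq_mul]
    _ = (j : ℝ) ^ 3 := by ring
  have hSvar : ∀ j : ℕ, variance (S j) μ ≤ K * (j : ℝ) ^ 3 := by
    intro j
    have hpair : Set.Pairwise (↑((Finset.univ : Finset ι) ×ˢ Finset.Icc 1 j) : Set (ι × ℕ))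
        fun p q => IndepFun (X p) (X q) μ :=
      fun p _ q _ hpq => hXindep.indepFun hpq
    calc variance (S j) μ
        = ∑ p ∈ Finset.univ ×ˢ Finset.Icc 1 j, variance (X p) μ := by
          rw [hS]; exact IndepFun.variance_sum (hmemP j) hpair
    _ = ∑ n : ι, ∑ i ∈ Finset.Icc 1 j, (c n ^ 2 / (σ n ^ 2) ^ 2 * V n) * (i:ℝ) ^ 2 := by
          rw [Finset.sum_product]
          refine Finset.sum_congr rfl fun n _ => Finset.sum_congr rfl fun i hi => ?_
          rw [hXvar (n, i) (Finset.mem_Icc.mp hi).1]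
          simp only [ha]
          ring
    _ = ∑ n : ι, (c n ^ 2 / (σ n ^ 2) ^ 2 * V n) * ∑ i ∈ Finset.Icc 1 j, (i:ℝ) ^ 2 := by
          simp [Finset.mul_sum]
    _ ≤ ∑ n : ι, (c n ^ 2 / (σ n ^ 2) ^ 2 * V n) * (j : ℝ) ^ 3 := by
          refine Finset.sum_le_sum fun n _ => ?_
          exact mul_le_mul_of_nonneg_left (hsumsq j)
            (mul_nonneg (by positivity) (hVnn n))
    _ = K * (j : ℝ) ^ 3 := by rw [hK, Finset.sum_mul]
  -- Chebyshev + Borel-Cantelli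
  have key : ∀ k : ℕ, ∀ᵐ ω ∂μ, ∀ᶠ j in atTop,
      |S j ω| < (1/((k:ℝ)+1)) * (j:ℝ)^3 := by
    intro k
    set δ : ℝ := 1/((k:ℝ)+1) with hδ
    have hδpos : 0 < δ := by positivity
    set E : ℕ → Set Ω := fun j => {ω | δ * (j:ℝ)^3 ≤ |S j ω|} with hE
    have cheb : ∀ j : ℕ, 1 ≤ j →
        μ (E j) ≤ ENNReal.ofReal ((K/δ^2) * (((j:ℝ)^3)⁻¹)) := by
      intro j hj
      have hj0 : (0:ℝ) < (j:ℝ) := by exact_mod_cast hj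
      have hjpos : (0:ℝ) < (j:ℝ)^3 := by positivity
      have hcpos : 0 < δ * (j:ℝ)^3 := by positivity
      have h := meas_ge_le_variance_div_sq (hSmem j) hcpos
      rw [hSint j] at h
      simp only [sub_zero] at h
      refine h.trans (ENNReal.ofReal_le_ofReal ?_)
      rw [div_le_iff₀ (by positivity)]
      have heq : (K/δ^2 * ((j:ℝ)^3)⁻¹) * (δ * (j:ℝ)^3)^2 = K * (j:ℝ)^3 := by
        field_simp
      rw [heq]
      exact hSvar j
    have hsumE : ∑' j, μ (E j) ≠ ⊤ := by
      rw [tsum_eq_zero_add' ENNReal.summable]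
      have hterm : ∀ j : ℕ,
          μ (E (j+1)) ≤ ENNReal.ofReal ((K/δ^2) * ((((j:ℝ)+1)^3)⁻¹)) := by
        intro j
        have h := cheb (j+1) (by omega)
        push_cast at h
        exact h
      have hsummable : Summable (fun j : ℕ => (K/δ^2) * ((((j:ℝ)+1)^3)⁻¹)) := by
        have h1 : Summable (fun j : ℕ => (((j:ℝ))^3)⁻¹) :=
          Real.summable_nat_pow_inv.mpr (by norm_num)
        have h2 := (summable_nat_add_iff 1).mpr h1
        have h3 : Summable (fun j : ℕ => ((((j:ℝ)+1))^3)⁻¹) := by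
          refine h2.congr fun j => ?_
          push_cast
          ring_nf
        exact h3.mul_left _
      have hne : (∑' j : ℕ, ENNReal.ofReal ((K/δ^2) * ((((j:ℝ)+1)^3)⁻¹))) ≠ ⊤ := by
        rw [← ENNReal.ofReal_tsum_of_nonneg (fun j => by positivity) hsummable]
        exact ENNReal.ofReal_ne_top
      refine ENNReal.add_ne_top.mpr ⟨measure_ne_top μ _, ?_⟩
      exact ne_top_of_le_ne_top hne (ENNReal.tsum_le_tsum hterm)
    have hBC := measure_limsup_atTop_eq_zero hsumE
    have hae : ∀ᵐ ω ∂μ, ω ∉ limsup E atTop := measure_eq_zero_iff_ae_notMem.mp hBC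
    filter_upwards [hae] with ω hω
    rw [mem_limsup_iff_frequently_mem, Filter.not_frequently] at hω
    filter_upwards [hω] with j hj
    have : ¬ (δ * (j:ℝ)^3 ≤ |S j ω|) := hj
    exact not_le.mp this
  have hS0 : ∀ᵐ ω ∂μ, Tendsto (fun j : ℕ => S j ω / (j:ℝ)^3) atTop (nhds 0) := by
    filter_upwards [ae_all_iff.mpr key] with ω hω
    rw [NormedAddCommGroup.tendsto_nhds_zero]
    intro e he
    obtain ⟨k, hk⟩ := exists_nat_one_div_lt he
    filter_upwards [hω k, eventually_ge_atTop 1] with j h1 h2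
    have hj0 : (0:ℝ) < (j:ℝ) := by exact_mod_cast h2
    have hjpos : (0:ℝ) < (j:ℝ)^3 := by positivity
    rw [Real.norm_eq_abs, abs_div, abs_of_pos hjpos, div_lt_iff₀ hjpos]
    nlinarith
  -- deterministic part
  set B : ℝ := ∑ n : ι, c n ^ 2 / (2 * σ n ^ 2) with hB
  set Q : ℕ → ℝ := fun j => ∑ i ∈ Finset.Icc 1 j, (i:ℝ)^2 with hQdef
  have hQ : ∀ j : ℕ, Q j = (j:ℝ)*((j:ℝ)+1)*(2*(j:ℝ)+1)/6 := by
    intro j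
    induction j with
    | zero => simp [hQdef]
    | succ j ih =>
      have hstep : Q (j+1) = Q j + ((j:ℝ)+1)^2 := by
        simp only [hQdef]
        rw [Finset.sum_Icc_succ_top (by omega : 1 ≤ j + 1)]
        push_cast
        ring
      rw [hstep, ih]
      push_cast
      ring
  have hlamS : ∀ j ω, lam j ω = S j ω + B * Q j := by
    intro j ω
    have hSval : S j ω = ∑ n : ι, ∑ i ∈ Finset.Icc 1 j,
        (c n * i / σ n ^ 2) * (y n i ω - (m n + c n * i)) := by
      rw [hS]
      simp only [Finset.sum_apply]
      rw [Finset.sum_product]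
    rw [hlam j, hSval, hB, hQdef, Finset.sum_mul, ← Finset.sum_add_distrib]
    refine Finset.sum_congr rfl fun n _ => ?_
    rw [Finset.mul_sum]
    calc ∑ i ∈ Finset.Icc 1 j, (1 / σ n ^ 2) *
          (c n * i * (y n i ω - m n) - c n ^ 2 * (i:ℝ) ^ 2 / 2)
        = ∑ i ∈ Finset.Icc 1 j, (c n * i / σ n ^ 2 * (y n i ω - (m n + c n * i))
            + c n ^ 2 / (2 * σ n ^ 2) * (i:ℝ) ^ 2) :=
          Finset.sum_congr rfl fun i _ => by ring
    _ = _ := by rw [Finset.sum_add_distrib, ← Finset.mul_sum]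
  have hQlim : Tendsto (fun j : ℕ => Q j / (j:ℝ)^3) atTop (nhds (1/3)) := by
    have h0 : Tendsto (fun j : ℕ => 1/(j:ℝ)) atTop (nhds 0) :=
      tendsto_one_div_atTop_nhds_zero_nat
    have hbase : Tendsto (fun j : ℕ => (1+1/(j:ℝ))*(2+1/(j:ℝ))/6) atTop
        (nhds ((1+0)*(2+0)/6)) :=
      ((tendsto_const_nhds.add h0).mul (tendsto_const_nhds.add h0)).div_const 6
    have heq : ((1:ℝ)+0)*(2+0)/6 = 1/3 := by norm_num
    rw [heq] at hbase
    refine hbase.congr' ?_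
    filter_upwards [eventually_ge_atTop 1] with j hj
    have hj0 : (0:ℝ) < (j:ℝ) := by exact_mod_cast hj
    rw [hQ j]
    field_simp
  have hdet : Tendsto (fun j : ℕ => (B * Q j) / (j:ℝ)^3) atTop
      (nhds (∑ n : ι, c n ^ 2 / (6 * (σ n) ^ 2))) := by
    have h := hQlim.const_mul B
    have hBQ : B * (1/3) = ∑ n : ι, c n ^ 2 / (6 * (σ n) ^ 2) := by
      rw [hB, Finset.sum_mul]
      refine Finset.sum_congr rfl fun n _ => ?_
      rw [mul_one_div, div_div]
      congr 1
      ring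
    rw [hBQ] at h
    refine h.congr fun j => ?_
    ring
  filter_upwards [hS0] with ω hω
  have h := hω.add hdet
  rw [zero_add] at h
  refine h.congr fun j => ?_
  rw [hlamS j ω, add_div]
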